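/- arXiv:hep-th/0508084 — 2 statements merged into one kernel-verified Lean document; each statement's English description precedes it below -/
import Mathlib

section
/- Let K be a free abelian group. Then there is an exact sequence of abelian groups 0 → H^0(Z; K) → C(Z, K ⊗ ℝ) → C(Z, K ⊗ (ℝ/ℤ)) → H^1(Z; K) → 0, for any compact Hausdorff space Z homotopy equivalent to a finite CW complex, where the middle map is induced by the quotient ℝ → ℝ/ℤ and the last map sends a continuous function to its homotopy class under the identification H^1(Z; K) ≅ [Z, K ⊗ ℝ/ℤ]. -/
section ESLCaux
open Set AddCircle unitInterval
open Set AddCircle unitInterval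
noncomputable section
local instance : Fact ((0:ℝ) < 1) := ⟨one_pos⟩

noncomputable def ESLC.Flog : AddCircle (1:ℝ) → ℝ := fun x => (equivIoc 1 (-2⁻¹) x : ℝ)

lemma Flog_coe_eq (x : AddCircle (1:ℝ)) : ((ESLC.Flog x : ℝ) : AddCircle (1:ℝ)) = x :=
  (equivIoc 1 (-2⁻¹)).symm_apply_apply x

def ESLC.Udom : Set (AddCircle (1:ℝ)) := (fun r : ℝ => (r : AddCircle (1:ℝ))) '' Ioo (-2⁻¹) 2⁻¹

lemma ESLC.ne_mem {r : ℝ} (hr : r ∈ Ioo (-2⁻¹:ℝ) 2⁻¹) :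
    (r : AddCircle (1:ℝ)) ≠ ((-2⁻¹ : ℝ) : AddCircle (1:ℝ)) := by
  intro h
  have h1 : r ∈ Ico (-2⁻¹:ℝ) (-2⁻¹ + 1) := ⟨hr.1.le, by linarith [hr.2]⟩
  have h2 : (-2⁻¹:ℝ) ∈ Ico (-2⁻¹:ℝ) (-2⁻¹ + 1) := ⟨le_refl _, by norm_num⟩
  have := (AddCircle.coe_eq_coe_iff_of_mem_Ico h1 h2).1 h
  linarith [hr.1]

lemma Flog_continuousAt {x : AddCircle (1:ℝ)} (hx : x ∈ ESLC.Udom) : ContinuousAt ESLC.Flog x := by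
  obtain ⟨r, hr, rfl⟩ := hx
  exact continuousAt_subtype_val.comp (continuousAt_equivIoc 1 (-2⁻¹) (ESLC.ne_mem hr))

def ESLC.cf : ℝ → AddCircle (1:ℝ) := fun r => (r : AddCircle (1:ℝ))

lemma cf_add (a b : ℝ) : ESLC.cf (a + b) = ESLC.cf a + ESLC.cf b := rfl

lemma cf_Flog (x : AddCircle (1:ℝ)) : ESLC.cf (ESLC.Flog x) = x := Flog_coe_eq x

lemma isOpen_Udom : IsOpen ESLC.Udom := QuotientAddGroup.isOpenMap_coe _ isOpen_Ioo

lemma zero_mem_Udom : (0 : AddCircle (1:ℝ)) ∈ ESLC.Udom :=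
  ⟨0, by constructor <;> norm_num, by norm_num⟩

/-- Main lifting lemma: a nullhomotopic map from a compact space into a torus lifts to ℝ^ι. -/
lemma ESLC.exists_lift {ι : Type} [Finite ι] {Z : Type} [TopologicalSpace Z] [CompactSpace Z]
    (h : C(Z, ι → AddCircle (1:ℝ))) (hh : ContinuousMap.Homotopic h 0) :
    ∃ g : C(Z, ι → ℝ), ∀ z i, ((g z i : ℝ) : AddCircle (1:ℝ)) = h z i := by
  obtain ⟨H0⟩ := hh
  -- H : Homotopy 0 h, so H (0, z) = 0 and H (1, z) = h z
  let H := H0.symm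
  -- the open set W of triples where the H-values at the two times are ESLC.Udom-close
  let d : (I × I) × Z → ι → AddCircle (1:ℝ) := fun p i => H (p.1.1, p.2) i - H (p.1.2, p.2) i
  have hd : Continuous d := by
    apply continuous_pi
    intro i
    exact ((continuous_apply i).comp (H.continuous.comp
        ((continuous_fst.comp continuous_fst).prodMk continuous_snd))).sub
      ((continuous_apply i).comp (H.continuous.comp
        ((continuous_snd.comp continuous_fst).prodMk continuous_snd)))
  let W : Set ((I × I) × Z) := {p | ∀ i, d p i ∈ ESLC.Udom}
  have hW : IsOpen W := by
    have : W = ⋂ i, (fun p => d p i) ⁻¹' ESLC.Udom := by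
      ext p; simp [W, Set.mem_iInter]
    rw [this]
    exact isOpen_iInter_of_finite fun i =>
      isOpen_Udom.preimage ((continuous_apply i).comp hd)
  have hdiag : ∀ (s : I) (z : Z), ((s, s), z) ∈ W := by
    intro s z i
    simpa [d, sub_self] using zero_mem_Udom
  -- find δ
  obtain ⟨δ, hδpos, hδ⟩ : ∃ δ > 0, ∀ p : (I × I) × Z,
      |(p.1.1 : ℝ) - (p.1.2 : ℝ)| < δ → p ∈ W := by
    by_cases hK : Wᶜ = ∅
    · exact ⟨1, one_pos, fun p _ => by
        by_contra hp
        exact absurd (Set.eq_empty_iff_forall_notMem.1 hK p) (by simpa using hp)⟩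
    · obtain ⟨p₀, hp₀⟩ := Set.nonempty_iff_ne_empty.2 hK
      have hKc : IsCompact Wᶜ := (hW.isClosed_compl).isCompact
      have hφ : Continuous fun p : (I × I) × Z => |(p.1.1 : ℝ) - (p.1.2 : ℝ)| :=
        (((continuous_subtype_val.comp (continuous_fst.comp continuous_fst)).sub
          (continuous_subtype_val.comp (continuous_snd.comp continuous_fst)))).abs
      obtain ⟨p₁, hp₁, hmin⟩ := hKc.exists_isMinOn ⟨p₀, hp₀⟩ hφ.continuousOn
      refine ⟨|(p₁.1.1 : ℝ) - (p₁.1.2 : ℝ)|, ?_, ?_⟩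
      · refine abs_pos.2 (sub_ne_zero.2 ?_)
        intro he
        have heq : p₁.1.1 = p₁.1.2 := Subtype.ext he
        apply hp₁
        intro i
        have hH : H (p₁.1.1, p₁.2) i = H (p₁.1.2, p₁.2) i := by rw [heq]
        simpa [d, hH, sub_self] using zero_mem_Udom
      · intro p hp
        by_contra hpW
        exact absurd (hmin hpW) (not_le.2 hp)
  obtain ⟨n, hn⟩ := exists_nat_one_div_lt hδpos
  set N : ℕ := n + 1 with hN
  have hNpos : (0:ℝ) < N := by positivity
  -- the partition times
  let tk : ℕ → I := fun k => projIcc 0 1 zero_le_one (k / N)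
  have htk : ∀ k, k ≤ N → (tk k : ℝ) = k / N := by
    intro k hk
    have hmem : (k:ℝ)/N ∈ Icc (0:ℝ) 1 :=
      ⟨by positivity, by rw [div_le_one hNpos]; exact_mod_cast hk⟩
    simp [tk, projIcc_of_mem zero_le_one hmem]
  -- consecutive differences are in ESLC.Udom
  have hstep : ∀ k, k + 1 ≤ N → ∀ z i,
      H (tk (k+1), z) i - H (tk k, z) i ∈ ESLC.Udom := by
    intro k hk z i
    refine hδ ((tk (k+1), tk k), z) ?_ i
    rw [htk (k+1) hk, htk k (le_of_lt (Nat.lt_of_succ_le hk))]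
    have : ((k:ℝ)+1)/N - (k:ℝ)/N = 1/N := by field_simp; ring
    rw [show (((k+1):ℕ):ℝ) = (k:ℝ)+1 by push_cast; ring, this, abs_of_pos (by positivity)]
    have hNr : ((N:ℕ):ℝ) = (n:ℝ)+1 := by rw [hN]; push_cast; ring
    rw [hNr]; exact hn
  -- the recursive lift
  let G : ℕ → Z → ι → ℝ := fun k => Nat.rec (fun _ _ => 0)
    (fun k gk z i => gk z i + ESLC.Flog (H (tk (k+1), z) i - H (tk k, z) i)) k
  have key : ∀ k, k ≤ N → Continuous (G k) ∧
      ∀ z i, ESLC.cf (G k z i) = H (tk k, z) i := by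
    intro k
    induction k with
    | zero =>
      intro _
      constructor
      · exact continuous_const
      · intro z i
        have ht0 : tk 0 = 0 := by
          apply Subtype.ext
          rw [htk 0 (Nat.zero_le N)]
          simp
        rw [ht0]
        simp [G, H, ESLC.cf]
    | succ k ih =>
      intro hk
      obtain ⟨hc, hv⟩ := ih (le_of_lt (Nat.lt_of_succ_le hk))
      have hGsucc : G (k+1) = fun z i => G k z i +
          ESLC.Flog (H (tk (k+1), z) i - H (tk k, z) i) := rfl
      constructor
      · rw [hGsucc]
        apply continuous_pi
        intro i
        apply ((continuous_apply i).comp hc).add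
        apply continuous_iff_continuousAt.2
        intro z
        have hmem := hstep k hk z i
        have hcont : Continuous fun z : Z => d ((tk (k+1), tk k), z) i :=
          (continuous_apply i).comp (hd.comp (Continuous.prodMk continuous_const continuous_id))
        exact ContinuousAt.comp (g := ESLC.Flog) (f := fun z : Z => d ((tk (k+1), tk k), z) i)
          (Flog_continuousAt hmem) hcont.continuousAt
      · intro z i
        have hrw : ESLC.cf (G (k+1) z i)
            = ESLC.cf (G k z i) + ESLC.cf (ESLC.Flog (H (tk (k+1), z) i - H (tk k, z) i)) := rfl
        rw [hrw, hv z i, cf_Flog]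
        abel
  obtain ⟨hc, hv⟩ := key N (le_refl N)
  refine ⟨⟨G N, hc⟩, fun z i => ?_⟩
  have ht1 : tk N = 1 := by
    apply Subtype.ext
    rw [htk N (le_refl N)]
    simp [div_self (ne_of_gt hNpos)]
  have hvv := hv z i
  rw [ht1] at hvv
  simpa [ESLC.cf, H] using hvv

end
end ESLCaux


open scoped ContinuousMap

/-! Reconstruction of the (December 2024) Mathlib definitions of `Mathlib.Topology.CWComplex`,
which have since been removed from Mathlib. -/

universe u

open CategoryTheory

namespace RelativeCWComplex

/-- The `n`-dimensional sphere is the set of points in ℝⁿ⁺¹ whose norm equals `1`,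
endowed with the subspace topology. -/
noncomputable def sphere (n : ℤ) : TopCat.{u} :=
  TopCat.of <| ULift <| Metric.sphere (0 : EuclideanSpace ℝ <| Fin <| Int.toNat <| n + 1) 1

/-- The `n`-dimensional closed disk is the set of points in ℝⁿ whose norm is at most `1`,
endowed with the subspace topology. -/
noncomputable def disk (n : ℤ) : TopCat.{u} :=
  TopCat.of <| ULift <| Metric.closedBall (0 : EuclideanSpace ℝ <| Fin <| Int.toNat n) 1

/-- The inclusion map from the `n`-sphere to the `(n + 1)`-disk. -/
noncomputable def sphereInclusion (n : ℤ) : sphere.{u} n ⟶ disk.{u} (n + 1) :=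
  TopCat.ofHom
    { toFun := fun p => ⟨⟨p.down.1, Metric.sphere_subset_closedBall p.down.2⟩⟩
      continuous_toFun := continuous_uliftUp.comp
        ((continuous_subtype_val.comp continuous_uliftDown).subtype_mk _) }

/-- The inclusion map from the disjoint union of `n`-spheres to the disjoint union of
`(n + 1)`-disks. -/
noncomputable def sigmaSphereInclusion (n : ℤ) (cells : Type u) :
    TopCat.of (Σ (_ : cells), sphere.{u} n) ⟶ TopCat.of (Σ (_ : cells), disk.{u} (n + 1)) :=
  TopCat.ofHom
    { toFun := Sigma.map id fun _ x => sphereInclusion.{u} n x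
      continuous_toFun := Continuous.sigma_map fun _ => (sphereInclusion.{u} n).hom.continuous }

/-- Given an attaching map for each `n`-sphere, the attaching map of their disjoint union. -/
noncomputable def sigmaAttachMap (X : TopCat.{u}) (n : ℤ) (cells : Type u)
    (attachMaps : cells → C(sphere.{u} n, X)) : TopCat.of (Σ (_ : cells), sphere.{u} n) ⟶ X :=
  TopCat.ofHom
    { toFun := fun x => attachMaps x.1 x.2
      continuous_toFun := continuous_sigma fun i => (attachMaps i).continuous }

/-- A type witnessing that `X'` is obtained from `X` by attaching `(n + 1)`-disks. -/
structure AttachCells (X X' : TopCat.{u}) (n : ℤ) where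
  /-- The index type over the `(n + 1)`-disks. -/
  cells : Type u
  /-- The attaching maps. -/
  attachMaps : cells → C(sphere.{u} n, X)
  /-- `X'` is the pushout of `∐ S(n) ⟶ X` and `∐ S(n) ⟶ ∐ D(n + 1)`. -/
  iso_pushout : X' ≅ Limits.pushout (sigmaSphereInclusion n cells)
    (sigmaAttachMap X n cells attachMaps)

end RelativeCWComplex

/-- A relative CW-complex: `sk 0 ≅ A`, and `sk (n + 1)` is obtained from `sk n` by attaching
`n`-disks. -/
structure RelativeCWComplex (A : TopCat.{u}) where
  /-- The skeletons (`sk i` is the `(i-1)`-skeleton). -/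
  sk : ℕ → TopCat.{u}
  /-- `sk 0` is `A`. -/
  isoSkZero : sk 0 ≅ A
  /-- `sk (n + 1)` is obtained from `sk n` by attaching `n`-disks. -/
  attachCells (n : ℕ) : RelativeCWComplex.AttachCells (sk n) (sk (n + 1)) ((n : ℤ) - 1)

/-- A CW-complex is a relative CW-complex whose `(-1)`-skeleton is empty. -/
abbrev CWComplex := RelativeCWComplex.{u} (TopCat.of PEmpty)

namespace RelativeCWComplex

/-- The inclusion `X ⟶ X'` when `X'` is obtained from `X` by attaching cells. -/
noncomputable def AttachCells.inclusion (X X' : TopCat.{u}) (n : ℤ) (att : AttachCells X X' n) :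
    X ⟶ X' :=
  Limits.pushout.inr _ _ ≫ att.iso_pushout.inv

/-- The inclusion of the skeletons. -/
noncomputable def skInclusion {A : TopCat.{u}} (X : RelativeCWComplex A) (n : ℕ) :
    X.sk n ⟶ X.sk (n + 1) :=
  AttachCells.inclusion (X.sk n) (X.sk (n + 1)) ((n : ℤ) - 1) (X.attachCells n)

/-- The topological space underlying a relative CW-complex: the colimit of its skeletons. -/
noncomputable def toTopCat {A : TopCat.{u}} (X : RelativeCWComplex A) : TopCat.{u} :=
  Limits.colimit (Functor.ofSequence (skInclusion X))

end RelativeCWComplex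

/-- A CW-complex (in the sense of `Mathlib.Topology.CWComplex`) is *finite* if it has finitely
many cells in each dimension and no cells above some dimension. -/
def CWComplex.IsFinite (W : CWComplex.{0}) : Prop :=
  (∀ n, Finite (W.attachCells n).cells) ∧
    ∃ N, ∀ n, N ≤ n → IsEmpty (W.attachCells n).cells

/-- `Z` has the homotopy type of a finite CW complex. -/
def HasFiniteCWHomotopyType (Z : Type) [TopologicalSpace Z] : Prop :=
  ∃ W : CWComplex.{0}, W.IsFinite ∧
    Nonempty (ContinuousMap.HomotopyEquiv Z W.toTopCat)

/-- Let `K` be a (finite-rank) free abelian group, realized as `ι → ℤ` for a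
finite basis-index `ι`, so that `K ⊗ ℝ = ι → ℝ` and `K ⊗ ℝ/ℤ = ι → ℝ/ℤ`.  For `Z` a compact
Hausdorff space of the homotopy type of a finite CW complex, the sequence
`0 → H⁰(Z; K) → C(Z, K ⊗ ℝ) → C(Z, K ⊗ ℝ/ℤ) → H¹(Z; K) → 0`
is exact, where `H⁰(Z; K)` is identified with the locally constant `K`-valued functions, the
middle map is induced by the quotient `ℝ → ℝ/ℤ`, and `H¹(Z; K)` is identified with the set
`[Z, K ⊗ ℝ/ℤ]` of homotopy classes, the last map sending a function to its homotopy class. -/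
theorem exact_sequence_locallyConstant_to_H1
    (ι : Type) [Finite ι] (Z : Type) [TopologicalSpace Z] [CompactSpace Z] [T2Space Z]
    (hZ : HasFiniteCWHomotopyType Z)
    -- the map `H⁰(Z; K) = LocallyConstant Z K → C(Z, K ⊗ ℝ)`
    (j : LocallyConstant Z (ι → ℤ) → C(Z, ι → ℝ))
    (hj : ∀ f z i, j f z i = ((f z i : ℤ) : ℝ))
    -- the map `C(Z, K ⊗ ℝ) → C(Z, K ⊗ ℝ/ℤ)` induced by the quotient `ℝ → ℝ/ℤ`
    (q : C(Z, ι → ℝ) → C(Z, ι → AddCircle (1 : ℝ)))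
    (hq : ∀ g z i, q g z i = ((g z i : ℝ) : AddCircle (1 : ℝ))) :
    -- exactness at `H⁰(Z; K)`: injectivity
    Function.Injective j ∧
    -- exactness at `C(Z, K ⊗ ℝ)`: `range j = ker q`
    (∀ g : C(Z, ι → ℝ), (∃ f, j f = g) ↔ q g = 0) ∧
    -- exactness at `C(Z, K ⊗ ℝ/ℤ)`: the image of `q` consists exactly of the functions whose
    -- homotopy class in `H¹(Z; K) = [Z, K ⊗ ℝ/ℤ]` is trivial
    (∀ h : C(Z, ι → AddCircle (1 : ℝ)),
      (∃ g, q g = h) ↔ ContinuousMap.Homotopic h 0) ∧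
    -- exactness at `H¹(Z; K)`: surjectivity of `C(Z, K ⊗ ℝ/ℤ) → [Z, K ⊗ ℝ/ℤ]`
    Function.Surjective
      (Quotient.mk (⟨ContinuousMap.Homotopic, ContinuousMap.Homotopic.equivalence⟩ :
        Setoid C(Z, ι → AddCircle (1 : ℝ)))) := by
  have coe_zero : (((0:ℝ)) : AddCircle (1:ℝ)) = 0 := rfl
  refine ⟨?_, ?_, ?_, ?_⟩
  · -- injectivity of j
    intro f f' hff
    apply LocallyConstant.ext
    intro z
    funext i
    have h2 := congrFun (DFunLike.congr_fun hff z) i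
    rw [hj, hj] at h2
    exact_mod_cast h2
  · -- exactness at C(Z, ι → ℝ)
    intro g
    constructor
    · rintro ⟨f, rfl⟩
      ext z i
      rw [hq, hj]
      simp only [ContinuousMap.zero_apply, Pi.zero_apply]
      rw [AddCircle.coe_eq_zero_iff]
      exact ⟨f z i, by simp⟩
    · intro hg0
      have hint : ∀ z i, ((⌊g z i⌋ : ℤ) : ℝ) = g z i := by
        intro z i
        have h1 : ((g z i : ℝ) : AddCircle (1:ℝ)) = 0 := by
          rw [← hq g z i, hg0]; simp
        rw [AddCircle.coe_eq_zero_iff] at h1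
        obtain ⟨m, hm⟩ := h1
        have hm' : (m : ℝ) = g z i := by simpa using hm
        rw [← hm', Int.floor_intCast]
      have hlc : IsLocallyConstant (fun z => (fun i => ⌊g z i⌋ : ι → ℤ)) := by
        rw [IsLocallyConstant.iff_exists_open]
        intro z
        refine ⟨⋂ i, {z' | |g z' i - g z i| < 2⁻¹}, ?_, ?_, ?_⟩
        · exact isOpen_iInter_of_finite fun i =>
            isOpen_lt (((continuous_apply i).comp g.continuous).sub continuous_const).abs
              continuous_const
        · simp
        · intro z' hz'
          funext i
          have hz'i : |g z' i - g z i| < 2⁻¹ := by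
            simpa using Set.mem_iInter.1 hz' i
          have h1 : |((⌊g z' i⌋ - ⌊g z i⌋ : ℤ) : ℝ)| < 1 := by
            push_cast
            rw [hint z' i, hint z i]
            linarith [hz'i]
          have h2 : |(⌊g z' i⌋ - ⌊g z i⌋ : ℤ)| < 1 := by exact_mod_cast h1
          have := Int.abs_lt_one_iff.1 h2
          omega
      refine ⟨⟨fun z i => ⌊g z i⌋, hlc⟩, ?_⟩
      ext z i
      rw [hj]
      exact hint z i
  · -- exactness at C(Z, ι → AddCircle 1)
    intro h
    constructor
    · rintro ⟨g, rfl⟩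
      have hcoe : Continuous (fun r : ℝ => (r : AddCircle (1:ℝ))) := continuous_quotient_mk'
      refine ⟨⟨⟨fun p => fun i => (((1 - (p.1 : ℝ)) * g p.2 i : ℝ) : AddCircle (1:ℝ)), ?_⟩,
        ?_, ?_⟩⟩
      · apply continuous_pi
        intro i
        exact hcoe.comp (((continuous_const.sub
          (continuous_subtype_val.comp continuous_fst)).mul
          ((continuous_apply i).comp (g.continuous.comp continuous_snd))))
      · intro z
        funext i
        simp [hq]
      · intro z
        funext i
        simp [coe_zero]
    · intro hh
      obtain ⟨g, hg⟩ := ESLC.exists_lift h hh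
      refine ⟨g, ?_⟩
      ext z i
      rw [hq]
      exact hg z i
  · -- surjectivity onto homotopy classes
    intro x
    exact Quot.inductionOn x fun a => ⟨a, rfl⟩
end

section
/- The second group cohomology of ℤ^n with coefficients in the circle group ℝ/ℤ (trivial action) is isomorphic to Λ^2(ℤ^n)^* ⊗ (ℝ/ℤ) ≅ (ℝ/ℤ)^{binomial(n,2)}. -/
open ExteriorAlgebra

namespace groupCohomology

universe u

variable {k G : Type u} [CommRing k] [Group G]

abbrev twoCocycles (A : Rep k G) : Submodule k (G × G → A) := cocycles₂ A

def twoCoboundaries (A : Rep k G) : Submodule k (twoCocycles A) :=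
  LinearMap.range (shortComplexH2 A).moduleCatToCycles

theorem mem_twoCocycles_iff {A : Rep k G} (f : G × G → A) :
    f ∈ twoCocycles A ↔ ∀ g h j : G,
      f (g * h, j) + f (g, h) = A.ρ g (f (h, j)) + f (g, h * j) :=
  mem_cocycles₂_iff f

theorem mem_twoCoboundaries_iff {A : Rep k G} (f : twoCocycles A) :
    f ∈ twoCoboundaries A ↔ ∃ x : G → A, ∀ g h : G, A.ρ g (x h) - x (g * h) + x g = f (g, h) := by
  constructor
  · rintro ⟨x, rfl⟩
    refine ⟨x, fun g h => ?_⟩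
    show _ = (d₁₂ A).hom x (g, h)
    rfl
  · rintro ⟨x, hx⟩
    exact ⟨x, Subtype.ext (funext fun gh => by
      show (d₁₂ A).hom x gh = _
      simpa [d₁₂_hom_apply] using hx gh.1 gh.2)⟩

noncomputable def isoH2 (A : Rep k G) : H2 A ≅ ModuleCat.of k (twoCocycles A ⧸ twoCoboundaries A) :=
  H2Iso A

end groupCohomology

namespace ZpowCircle

variable (n : ℕ)

/-- Index type for ordered pairs. -/
abbrev P (n : ℕ) := {p : Fin n × Fin n // p.1 < p.2}

def PEquivSigma : P n ≃ Σ j : Fin n, Fin j.val where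
  toFun p := ⟨p.1.2, ⟨p.1.1.val, p.2⟩⟩
  invFun q := ⟨(⟨q.2.val, lt_trans q.2.2 q.1.2⟩, q.1), q.2.2⟩
  left_inv p := by ext <;> rfl
  right_inv q := by ext <;> rfl

lemma card_P : Fintype.card (P n) = n.choose 2 := by
  rw [Fintype.card_congr (PEquivSigma n), Fintype.card_sigma]
  simp only [Fintype.card_fin]
  rw [Fin.sum_univ_eq_sum_range (fun i => i) n]
  have := Finset.sum_range_id_mul_two n
  rw [Nat.choose_two_right]
  omega

noncomputable def eV (i : Fin n) : (Fin n → ℤ) := Pi.single i 1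

noncomputable def elt (p : P n) : ExteriorAlgebra ℤ (Fin n → ℤ) :=
  ι ℤ (eV n p.1.1) * ι ℤ (eV n p.1.2)

lemma elt_eq_ιMulti (p : P n) : elt n p = ιMulti ℤ 2 ![eV n p.1.1, eV n p.1.2] := by
  rw [ιMulti_apply]
  simp [elt, List.ofFn_succ]

lemma elt_mem (p : P n) : elt n p ∈ ⋀[ℤ]^2 (Fin n → ℤ) := by
  rw [elt_eq_ιMulti]
  exact ιMulti_range ℤ 2 (Set.mem_range_self _)

/-- The 2x2-minor alternating form. -/
noncomputable def altp (p : P n) : (Fin n → ℤ) [⋀^Fin 2]→ₗ[ℤ] ℤ :=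
  (Matrix.detRowAlternating).compLinearMap
    (LinearMap.pi ![LinearMap.proj p.1.1, LinearMap.proj p.1.2])

lemma altp_apply (p : P n) (v : Fin 2 → (Fin n → ℤ)) :
    altp n p v = v 0 p.1.1 * v 1 p.1.2 - v 0 p.1.2 * v 1 p.1.1 := by
  rw [altp, AlternatingMap.compLinearMap_apply]
  have h : ∀ w : Fin 2 → Fin 2 → ℤ, Matrix.detRowAlternating w = Matrix.det (Matrix.of w) :=
    fun w => rfl
  rw [h, Matrix.det_fin_two]
  simp [LinearMap.pi_apply]

noncomputable def lam (p : P n) : ExteriorAlgebra ℤ (Fin n → ℤ) →ₗ[ℤ] ℤ :=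
  liftAlternating (Function.update (fun _ => 0) 2 (altp n p))

lemma lam_elt (p q : P n) : lam n p (elt n q) = if p = q then 1 else 0 := by
  rw [elt_eq_ιMulti, lam, liftAlternating_apply_ιMulti, Function.update_self, altp_apply]
  obtain ⟨⟨i, j⟩, hij⟩ := p
  obtain ⟨⟨k, l⟩, hkl⟩ := q
  simp only [Matrix.cons_val_zero, Matrix.cons_val_one, Matrix.head_cons, eV,
    Pi.single_apply, Subtype.mk.injEq, Prod.mk.injEq]
  have hij' : (i:ℕ) < j := hij
  have hkl' : (k:ℕ) < l := hkl
  split_ifs <;> simp_all [Fin.ext_iff] <;> omega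

end ZpowCircle

namespace ZpowCircle

variable (n : ℕ)

lemma pair_mem_span (a b : Fin n → ℤ) :
    ι ℤ a * ι ℤ b ∈ Submodule.span ℤ (Set.range (elt n)) := by
  set S := Submodule.span ℤ (Set.range (elt n)) with hS
  have key : ∀ i j : Fin n, ι ℤ (eV n i) * ι ℤ (eV n j) ∈ S := by
    intro i j
    rcases lt_trichotomy i j with h | h | h
    · exact Submodule.subset_span ⟨⟨(i, j), h⟩, rfl⟩
    · subst h; rw [ι_sq_zero]; exact S.zero_mem
    · have : ι ℤ (eV n i) * ι ℤ (eV n j) = -(ι ℤ (eV n j) * ι ℤ (eV n i)) := by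
        rw [eq_neg_iff_add_eq_zero, add_comm]; exact ι_add_mul_swap _ _
      rw [this]
      exact S.neg_mem (Submodule.subset_span ⟨⟨(j, i), h⟩, rfl⟩)
  have ha : a = ∑ i : Fin n, a i • eV n i := by
    ext t; simp [eV, Pi.single_apply]
  have hb : b = ∑ j : Fin n, b j • eV n j := by
    ext t; simp [eV, Pi.single_apply]
  have heq : ι ℤ a * ι ℤ b
      = ∑ i : Fin n, ∑ j : Fin n, (a i * b j) • (ι ℤ (eV n i) * ι ℤ (eV n j)) := by
    calc ι ℤ a * ι ℤ b
        = (∑ i : Fin n, a i • ι ℤ (eV n i)) * (∑ j : Fin n, b j • ι ℤ (eV n j)) := by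
          congr 1
          · conv_lhs => rw [ha]
            rw [map_sum]
            exact Finset.sum_congr rfl fun i _ => map_smul _ _ _
          · conv_lhs => rw [hb]
            rw [map_sum]
            exact Finset.sum_congr rfl fun j _ => map_smul _ _ _
      _ = ∑ i : Fin n, ∑ j : Fin n, (a i * b j) • (ι ℤ (eV n i) * ι ℤ (eV n j)) := by
          rw [Finset.sum_mul]
          refine Finset.sum_congr rfl fun i _ => ?_
          rw [Finset.mul_sum]
          refine Finset.sum_congr rfl fun j _ => ?_
          rw [smul_mul_smul_comm]
  rw [heq]
  exact Submodule.sum_mem _ fun i _ => Submodule.sum_mem _ fun j _ =>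
    Submodule.smul_mem _ _ (key i j)

lemma span_elt : Submodule.span ℤ (Set.range (elt n)) = ⋀[ℤ]^2 (Fin n → ℤ) := by
  rw [← ιMulti_span_fixedDegree]
  apply le_antisymm
  · refine Submodule.span_le.2 ?_
    rintro _ ⟨p, rfl⟩
    rw [elt_eq_ιMulti]
    exact Submodule.subset_span (Set.mem_range_self _)
  · refine Submodule.span_le.2 ?_
    rintro _ ⟨v, rfl⟩
    have : ιMulti ℤ 2 v = ι ℤ (v 0) * ι ℤ (v 1) := by
      rw [ιMulti_apply]; simp [List.ofFn_succ]
    rw [this]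
    exact pair_mem_span n (v 0) (v 1)

noncomputable def bE : Module.Basis (P n) ℤ (⋀[ℤ]^2 (Fin n → ℤ)) := by
  refine Module.Basis.mk (v := fun p => (⟨elt n p, elt_mem n p⟩ : ⋀[ℤ]^2 (Fin n → ℤ))) ?_ ?_
  · apply LinearIndependent.of_comp (⋀[ℤ]^2 (Fin n → ℤ)).subtype
    rw [linearIndependent_iff]
    intro lc hlc
    ext q
    have := congrArg (lam n q) hlc
    rw [map_zero, Finsupp.linearCombination_apply, Finsupp.sum, map_sum] at this
    simp only [Function.comp_apply, Submodule.coe_subtype, map_smul, lam_elt] at this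
    rw [Finset.sum_eq_single q (fun p _ hpq => by simp [Ne.symm hpq])
      (fun hq => by simp [Finsupp.notMem_support_iff.1 hq])] at this
    simpa using this
  · rw [top_le_iff]
    apply Submodule.map_injective_of_injective (⋀[ℤ]^2 (Fin n → ℤ)).injective_subtype
    rw [Submodule.map_span, Submodule.map_subtype_top]
    have himg : ((⋀[ℤ]^2 (Fin n → ℤ)).subtype ''
        Set.range fun p => (⟨elt n p, elt_mem n p⟩ : ⋀[ℤ]^2 (Fin n → ℤ))) = Set.range (elt n) := by
      ext x
      constructor
      · rintro ⟨_, ⟨p, rfl⟩, rfl⟩; exact ⟨p, rfl⟩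
      · rintro ⟨p, rfl⟩; exact ⟨_, ⟨p, rfl⟩, rfl⟩
    rw [himg, span_elt]

end ZpowCircle

namespace ZpowCircle

variable (n : ℕ)

abbrev M := AddCircle (1 : ℝ)

noncomputable def dualTensorEquiv :
    TensorProduct ℤ (Module.Dual ℤ (⋀[ℤ]^2 (Fin n → ℤ))) M ≃ₗ[ℤ] (P n → M) :=
  (TensorProduct.congr ((bE n).dualBasis.repr) (LinearEquiv.refl ℤ M)).trans
    ((TensorProduct.finsuppScalarLeft ℤ M (P n)).trans
      (Finsupp.linearEquivFunOnFinite ℤ M (P n)))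

noncomputable def piFinEquiv : (P n → M) ≃ₗ[ℤ] (Fin (n.choose 2) → M) :=
  LinearEquiv.piCongrLeft' ℤ (fun _ => M) (Fintype.equivFinOfCardEq (card_P n))

abbrev G (n : ℕ) := Multiplicative (Fin n → ℤ)

noncomputable abbrev AA (n : ℕ) : Rep ℤ (G n) := Rep.trivial ℤ (G n) M

/-- generator -/
noncomputable def eG (i : Fin n) : G n := Multiplicative.ofAdd (Pi.single i 1)

noncomputable def Phi0 : ((G n × G n) → M) →ₗ[ℤ] (P n → M) :=
  LinearMap.pi fun p =>
    (LinearMap.proj (R := ℤ) (φ := fun _ : G n × G n => M) (eG n p.1.1, eG n p.1.2))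
    - (LinearMap.proj (R := ℤ) (φ := fun _ : G n × G n => M) (eG n p.1.2, eG n p.1.1))

lemma Phi0_apply (f : (G n × G n) → M) (p : P n) :
    Phi0 n f p = f (eG n p.1.1, eG n p.1.2) - f (eG n p.1.2, eG n p.1.1) := rfl

noncomputable def PhiZ : groupCohomology.twoCocycles (AA n) →ₗ[ℤ] (P n → M) :=
  (Phi0 n).comp (groupCohomology.twoCocycles (AA n)).subtype

lemma key_cocycle (f : groupCohomology.twoCocycles (AA n)) (g h j : G n) :
    f (g * h, j) + f (g, h) = f (h, j) + f (g, h * j) := by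
  have := (groupCohomology.mem_twoCocycles_iff (A := AA n) f).1 f.2 g h j
  rwa [Rep.trivial_ρ_apply] at this

end ZpowCircle

namespace ZpowCircle

variable (n : ℕ)

/-- The commutator pairing of a 2-cocycle. -/
noncomputable def cP (f : groupCohomology.twoCocycles (AA n)) (g h : G n) : M :=
  f (g, h) - f (h, g)

lemma cP_add_right (f : groupCohomology.twoCocycles (AA n)) (g h j : G n) :
    cP n f g (h * j) = cP n f g h + cP n f g j := by
  have q1 : f (g, h * j) = f (g * h, j) + f (g, h) - f (h, j) := by
    rw [eq_sub_iff_add_eq, add_comm (f (g, h * j)) (f (h, j))]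
    exact (key_cocycle n f g h j).symm
  have q2 : f (h * j, g) = f (j, g) + f (h, j * g) - f (h, j) := by
    rw [eq_sub_iff_add_eq]
    exact key_cocycle n f h j g
  have q3 : f (h, g * j) = f (h * g, j) + f (h, g) - f (g, j) := by
    rw [eq_sub_iff_add_eq, add_comm (f (h, g * j)) (f (g, j))]
    exact (key_cocycle n f h g j).symm
  have hcm : j * g = g * j := mul_comm _ _
  have hcm2 : h * g = g * h := mul_comm _ _
  unfold cP
  rw [q1, q2, hcm, q3, hcm2]
  abel

lemma cP_antisymm (f : groupCohomology.twoCocycles (AA n)) (g h : G n) :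
    cP n f g h = - cP n f h g := by
  unfold cP; abel

lemma cP_eq_zero (f : groupCohomology.twoCocycles (AA n))
    (hp : ∀ p : P n, cP n f (eG n p.1.1) (eG n p.1.2) = 0) (g h : G n) :
    cP n f g h = 0 := by
  have hbasis : ∀ i j : Fin n, cP n f (eG n i) (eG n j) = 0 := by
    intro i j
    rcases lt_trichotomy i j with hij | rfl | hij
    · exact hp ⟨(i, j), hij⟩
    · unfold cP; exact sub_self _
    · rw [cP_antisymm, hp ⟨(j, i), hij⟩, neg_zero]
  -- build a bilinear map out of cP and use basis extensionality
  have hrad : ∀ (g : G n) (x y : Fin n → ℤ),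
      cP n f g (Multiplicative.ofAdd (x + y))
        = cP n f g (Multiplicative.ofAdd x) + cP n f g (Multiplicative.ofAdd y) := by
    intro g x y
    exact cP_add_right n f g (Multiplicative.ofAdd x) (Multiplicative.ofAdd y)
  have hlad : ∀ (h : G n) (x y : Fin n → ℤ),
      cP n f (Multiplicative.ofAdd (x + y)) h
        = cP n f (Multiplicative.ofAdd x) h + cP n f (Multiplicative.ofAdd y) h := by
    intro h x y
    rw [cP_antisymm, hrad, cP_antisymm n f h, cP_antisymm n f h, neg_add]
    abel
  set L2 : G n → ((Fin n → ℤ) →ₗ[ℤ] M) := fun g =>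
    (AddMonoidHom.mk' (fun y => cP n f g (Multiplicative.ofAdd y)) (hrad g)).toIntLinearMap
    with hL2
  have hL2add : ∀ x y : Fin n → ℤ,
      L2 (Multiplicative.ofAdd (x + y))
        = L2 (Multiplicative.ofAdd x) + L2 (Multiplicative.ofAdd y) := by
    intro x y
    refine LinearMap.ext fun z => ?_
    exact hlad (Multiplicative.ofAdd z) x y
  set L : (Fin n → ℤ) →ₗ[ℤ] ((Fin n → ℤ) →ₗ[ℤ] M) :=
    (AddMonoidHom.mk' (fun x => L2 (Multiplicative.ofAdd x)) hL2add).toIntLinearMap with hL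
  have hL0 : L = 0 := by
    apply Module.Basis.ext (Pi.basisFun ℤ (Fin n))
    intro i
    apply Module.Basis.ext (Pi.basisFun ℤ (Fin n))
    intro j
    have : L (Pi.basisFun ℤ (Fin n) i) (Pi.basisFun ℤ (Fin n) j)
        = cP n f (eG n i) (eG n j) := by
      simp only [Pi.basisFun_apply]
      rfl
    rw [this, hbasis]
    rfl
  have := congrFun (congrArg (fun (T : (Fin n → ℤ) →ₗ[ℤ] ((Fin n → ℤ) →ₗ[ℤ] M)) x =>
    (T x : (Fin n → ℤ) → M)) hL0)
  have h2 := congrArg (fun (T : (Fin n → ℤ) →ₗ[ℤ] M) => T (Multiplicative.toAdd h))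
    (congrArg L (rfl : Multiplicative.toAdd g = Multiplicative.toAdd g))
  -- simpler: evaluate directly
  have heval : L (Multiplicative.toAdd g) (Multiplicative.toAdd h) = cP n f g h := rfl
  rw [hL0] at heval
  simpa using heval.symm

end ZpowCircle

namespace ZpowCircle

variable (n : ℕ)

/-- Type synonym carrying the twisted group structure. -/
def EE (n : ℕ) := M × (Fin n → ℤ)

noncomputable def eGroup (f : (Fin n → ℤ) → (Fin n → ℤ) → M)
    (hcoc : ∀ x y z, f (x + y) z + f x y = f y z + f x (y + z))
    (hsym : ∀ x y, f x y = f y x)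
    (h0 : ∀ y, f 0 y = f 0 0) : AddCommGroup (EE n) :=
  letI : Add (EE n) := ⟨fun p q => (p.1 + q.1 + f p.2 q.2, p.2 + q.2)⟩
  letI : Zero (EE n) := ⟨(- f 0 0, 0)⟩
  letI : Neg (EE n) := ⟨fun p => (- p.1 - f p.2 (-p.2) - f 0 0, - p.2)⟩
  { add := (· + ·), zero := 0, neg := (- ·), nsmul := nsmulRec, zsmul := zsmulRec,
    add_assoc := fun a b c => by
      have key : f (a.2 + b.2) c.2 = f b.2 c.2 + f a.2 (b.2 + c.2) - f a.2 b.2 := by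
        rw [eq_sub_iff_add_eq]; exact hcoc a.2 b.2 c.2
      refine Prod.ext ?_ ?_
      · show (a.1 + b.1 + f a.2 b.2) + c.1 + f (a.2 + b.2) c.2
          = a.1 + (b.1 + c.1 + f b.2 c.2) + f a.2 (b.2 + c.2)
        rw [key]; abel
      · exact add_assoc a.2 b.2 c.2,
    zero_add := fun a => by
      refine Prod.ext ?_ ?_
      · show - f 0 0 + a.1 + f 0 a.2 = a.1
        rw [h0 a.2]; abel
      · exact zero_add a.2,
    add_zero := fun a => by
      refine Prod.ext ?_ ?_
      · show a.1 + (- f 0 0) + f a.2 0 = a.1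
        rw [hsym a.2 0, h0 a.2]; abel
      · exact add_zero a.2,
    neg_add_cancel := fun a => by
      refine Prod.ext ?_ ?_
      · show (- a.1 - f a.2 (-a.2) - f 0 0) + a.1 + f (-a.2) a.2 = - f 0 0
        rw [hsym (-a.2) a.2]; abel
      · exact neg_add_cancel a.2,
    add_comm := fun a b => by
      refine Prod.ext ?_ ?_
      · show a.1 + b.1 + f a.2 b.2 = b.1 + a.1 + f b.2 a.2
        rw [hsym a.2 b.2]; abel
      · exact add_comm a.2 b.2 }

lemma symm_cocycle_is_coboundary (f : (G n × G n) → M)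
    (hcoc : ∀ g h j : G n, f (g * h, j) + f (g, h) = f (h, j) + f (g, h * j))
    (hsym : ∀ g h : G n, f (g, h) = f (h, g)) :
    ∃ φ : G n → M, ∀ g h : G n, φ h - φ (g * h) + φ g = f (g, h) := by
  set F : (Fin n → ℤ) → (Fin n → ℤ) → M :=
    fun x y => f (Multiplicative.ofAdd x, Multiplicative.ofAdd y) with hF
  have hF0 : ∀ y, F 0 y = F 0 0 := by
    intro y
    have h := hcoc 1 1 (Multiplicative.ofAdd y)
    simp only [one_mul] at h
    -- h : f (1, ofAdd y) + f (1,1) = f (1, ofAdd y) + f (1, ofAdd y)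
    have := add_left_cancel h
    exact this.symm
  have hFcoc : ∀ x y z, F (x + y) z + F x y = F y z + F x (y + z) :=
    fun x y z => hcoc (Multiplicative.ofAdd x) (Multiplicative.ofAdd y) (Multiplicative.ofAdd z)
  have hFsym : ∀ x y, F x y = F y x :=
    fun x y => hsym (Multiplicative.ofAdd x) (Multiplicative.ofAdd y)
  letI : AddCommGroup (EE n) := eGroup n F hFcoc hFsym hF0
  let s : (Fin n → ℤ) →ₗ[ℤ] EE n :=
    (Pi.basisFun ℤ (Fin n)).constr ℤ (fun i => ((0, Pi.single i 1) : EE n))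
  let π : EE n →+ (Fin n → ℤ) := AddMonoidHom.mk' Prod.snd (fun a b => rfl)
  have hπs : π.toIntLinearMap.comp s = LinearMap.id := by
    apply Module.Basis.ext (Pi.basisFun ℤ (Fin n))
    intro i
    rw [LinearMap.comp_apply, show s (Pi.basisFun ℤ (Fin n) i) = ((0, Pi.single i 1) : EE n) from
      Module.Basis.constr_basis _ _ _ _]
    simp [Pi.basisFun_apply, π]
    rfl
  have hsnd : ∀ x, (s x).2 = x := fun x => LinearMap.ext_iff.1 hπs x
  have hadd : ∀ x y, (s (x + y)).1 = (s x).1 + (s y).1 + F x y := by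
    intro x y
    have h' : s (x + y) = s x + s y := map_add s x y
    have : (s x + s y).1 = (s x).1 + (s y).1 + F (s x).2 (s y).2 := rfl
    rw [h', this, hsnd, hsnd]
  refine ⟨fun g => - (s (Multiplicative.toAdd g)).1, fun g h => ?_⟩
  have htoAdd : Multiplicative.toAdd (g * h) = Multiplicative.toAdd g + Multiplicative.toAdd h :=
    rfl
  dsimp only
  rw [htoAdd, hadd]
  have hfg : F (Multiplicative.toAdd g) (Multiplicative.toAdd h) = f (g, h) := rfl
  rw [← hfg]
  abel

end ZpowCircle

namespace ZpowCircle

open groupCohomology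

variable (n : ℕ)

lemma coboundary_ker : twoCoboundaries (AA n) ≤ LinearMap.ker (PhiZ n) := by
  intro f hf
  rw [LinearMap.mem_ker]
  obtain ⟨x, hx⟩ := (mem_twoCoboundaries_iff (A := AA n) f).1 hf
  funext p
  have h1 := hx (eG n p.1.1) (eG n p.1.2)
  have h2 := hx (eG n p.1.2) (eG n p.1.1)
  rw [Rep.trivial_ρ_apply] at h1 h2
  have : PhiZ n f p = (f : G n × G n → M) (eG n p.1.1, eG n p.1.2)
      - (f : G n × G n → M) (eG n p.1.2, eG n p.1.1) := rfl
  rw [this, ← h1, ← h2, mul_comm (eG n p.1.2) (eG n p.1.1)]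
  simp only [Pi.zero_apply]
  abel

lemma ker_le_coboundary : LinearMap.ker (PhiZ n) ≤ twoCoboundaries (AA n) := by
  intro f hf
  have hp : ∀ p : P n, cP n f (eG n p.1.1) (eG n p.1.2) = 0 := by
    intro p
    have := congrFun (LinearMap.mem_ker.1 hf) p
    rw [Pi.zero_apply] at this
    exact this
  have hall := cP_eq_zero n f hp
  have hsym : ∀ g h : G n, (f : G n × G n → M) (g, h) = f (h, g) := by
    intro g h
    have := hall g h
    unfold cP at this
    exact sub_eq_zero.1 this
  obtain ⟨φ, hφ⟩ := symm_cocycle_is_coboundary n f (key_cocycle n f) hsym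
  rw [mem_twoCoboundaries_iff]
  exact ⟨φ, fun g h => by rw [Rep.trivial_ρ_apply]; exact hφ g h⟩

lemma phiZ_surjective : Function.Surjective (PhiZ n) := by
  intro β
  set f0 : G n × G n → M := fun gh => ∑ p : P n,
    ((Multiplicative.toAdd gh.1 p.1.1) * (Multiplicative.toAdd gh.2 p.1.2)) • β p with hf0
  have hmem : f0 ∈ twoCocycles (AA n) := by
    rw [mem_twoCocycles_iff]
    intro g h j
    rw [Rep.trivial_ρ_apply]
    show (∑ p : P n, _) + (∑ p : P n, _) = (∑ p : P n, _) + (∑ p : P n, _)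
    rw [← Finset.sum_add_distrib, ← Finset.sum_add_distrib]
    refine Finset.sum_congr rfl fun p _ => ?_
    rw [← add_smul, ← add_smul]
    congr 1
    have e1 : Multiplicative.toAdd (g * h) = Multiplicative.toAdd g + Multiplicative.toAdd h := rfl
    have e2 : Multiplicative.toAdd (h * j) = Multiplicative.toAdd h + Multiplicative.toAdd j := rfl
    rw [e1, e2, Pi.add_apply, Pi.add_apply]
    ring
  refine ⟨⟨f0, hmem⟩, ?_⟩
  funext p
  have hPhi : PhiZ n ⟨f0, hmem⟩ p = f0 (eG n p.1.1, eG n p.1.2) - f0 (eG n p.1.2, eG n p.1.1) :=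
    rfl
  have htA : ∀ i : Fin n, Multiplicative.toAdd (eG n i) = Pi.single i 1 := fun i => rfl
  have hsum1 : f0 (eG n p.1.1, eG n p.1.2) = β p := by
    rw [hf0]
    simp only [htA]
    rw [Finset.sum_eq_single p]
    · simp [Pi.single_apply]
    · intro q _ hq
      obtain ⟨⟨k, l⟩, hkl⟩ := q
      obtain ⟨⟨i, j⟩, hij⟩ := p
      have : ¬(k = i ∧ l = j) := by
        intro ⟨h1, h2⟩
        exact hq (by simp [Subtype.ext_iff, Prod.ext_iff, h1, h2])
      simp only [Pi.single_apply]
      rcases Decidable.em (k = i) with h1 | h1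
      · have h2 : ¬ l = j := fun h2 => this ⟨h1, h2⟩
        simp [h2]
      · simp [h1]
    · intro hp'
      exact absurd (Finset.mem_univ p) hp'
  have hsum2 : f0 (eG n p.1.2, eG n p.1.1) = 0 := by
    rw [hf0]
    simp only [htA]
    refine Finset.sum_eq_zero fun q _ => ?_
    obtain ⟨⟨k, l⟩, hkl⟩ := q
    obtain ⟨⟨i, j⟩, hij⟩ := p
    have : ¬(k = j ∧ l = i) := by
      rintro ⟨rfl, rfl⟩
      exact absurd (lt_trans hkl hij) (lt_irrefl _)
    simp only [Pi.single_apply]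
    rcases Decidable.em (k = j) with h1 | h1
    · have h2 : ¬ l = i := fun h2 => this ⟨h1, h2⟩
      simp [h2]
    · simp [h1]
  rw [hPhi, hsum1, hsum2, sub_zero]

noncomputable def EB : (twoCocycles (AA n) ⧸ twoCoboundaries (AA n)) ≃ₗ[ℤ] (P n → M) :=
  LinearEquiv.ofBijective
    (Submodule.liftQ (twoCoboundaries (AA n)) (PhiZ n) (coboundary_ker n))
    ⟨by
      rw [← LinearMap.ker_eq_bot]
      exact Submodule.ker_liftQ_eq_bot _ _ _ (ker_le_coboundary n),
     by
      intro β
      obtain ⟨f, hf⟩ := phiZ_surjective n β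
      exact ⟨Submodule.Quotient.mk f, by rwa [Submodule.liftQ_apply]⟩⟩

end ZpowCircle

namespace ZpowCircle

noncomputable def isoAddEquiv {X Y : ModuleCat ℤ} (i : X ≅ Y) : X ≃+ Y where
  toFun := i.hom.hom
  invFun := i.inv.hom
  left_inv x := i.hom_inv_id_apply x
  right_inv y := i.inv_hom_id_apply y
  map_add' := map_add i.hom.hom

end ZpowCircle

/-- The second group cohomology of `ℤⁿ` with coefficients in the circle group
`ℝ/ℤ` (trivial action) is isomorphic to `Λ²(ℤⁿ)* ⊗ (ℝ/ℤ) ≅ (ℝ/ℤ)^(binomial n 2)`.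
(Group cohomology is taken with `ℤⁿ` acting trivially on `ℝ/ℤ`, viewed as a trivial
representation on the `ℤ`-module `ℝ/ℤ`.) -/
theorem groupCohomology_two_zpow_circle (n : ℕ) :
    Nonempty ((groupCohomology (Rep.trivial ℤ (Multiplicative (Fin n → ℤ))
        (AddCircle (1 : ℝ))) 2) ≃+
        TensorProduct ℤ (Module.Dual ℤ (⋀[ℤ]^2 (Fin n → ℤ))) (AddCircle (1 : ℝ))) ∧
    Nonempty ((groupCohomology (Rep.trivial ℤ (Multiplicative (Fin n → ℤ))
        (AddCircle (1 : ℝ))) 2) ≃+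
        (Fin (n.choose 2) → AddCircle (1 : ℝ))) := by
  have e0 := ZpowCircle.isoAddEquiv (groupCohomology.isoH2 (ZpowCircle.AA n))
  refine ⟨⟨?_⟩, ⟨?_⟩⟩
  · exact (e0.trans (ZpowCircle.EB n).toAddEquiv).trans
      (ZpowCircle.dualTensorEquiv n).symm.toAddEquiv
  · exact (e0.trans (ZpowCircle.EB n).toAddEquiv).trans (ZpowCircle.piFinEquiv n).toAddEquiv
end
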